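/- Let Σ be symmetric positive definite with largest eigenvalue λ_max. Then the maximum of φ(u) = −½ uᵀ Σ⁻¹ u + (p/2) log(4 uᵀu) over R^p \ {0} is attained at u = ±√(p λ_max) e, where e is any unit eigenvector of Σ corresponding to λ_max, and at no point outside the eigenspace of λ_max. -/

import Mathlib

open Matrix

/-- For symmetric positive definite `Σ` with largest eigenvalue `λmax`, the maximum of
`φ(u) = -½ uᵀΣ⁻¹u + (p/2) log(4 uᵀu)` over `u ≠ 0` is attained at `±√(p λmax) e` for any
unit eigenvector `e` of `λmax`, and any maximizer lies in the eigenspace of `λmax`. -/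
theorem med_anisotropic_maximizers (p : ℕ) (hp : 0 < p)
    (S : Matrix (Fin p) (Fin p) ℝ) (hS : S.PosDef) (hSym : S.IsSymm)
    (φ : (Fin p → ℝ) → ℝ)
    (hφ : ∀ w, φ w = -(1/2 : ℝ) * (w ⬝ᵥ (S⁻¹ *ᵥ w)) + ((p : ℝ)/2) * Real.log (4 * (w ⬝ᵥ w)))
    (lmax : ℝ)
    (hlmax_ev : ∃ v : Fin p → ℝ, v ≠ 0 ∧ S *ᵥ v = lmax • v)
    (hlmax_top : ∀ (μ : ℝ) (v : Fin p → ℝ), v ≠ 0 → S *ᵥ v = μ • v → μ ≤ lmax)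
    (e : Fin p → ℝ) (he_unit : e ⬝ᵥ e = 1) (he_ev : S *ᵥ e = lmax • e) :
    (∀ v : Fin p → ℝ, v ≠ 0 → φ v ≤ φ (Real.sqrt ((p : ℝ) * lmax) • e)) ∧
    (∀ v : Fin p → ℝ, v ≠ 0 → φ v ≤ φ (-(Real.sqrt ((p : ℝ) * lmax)) • e)) ∧
    (∀ u : Fin p → ℝ, u ≠ 0 → (∀ v : Fin p → ℝ, v ≠ 0 → φ v ≤ φ u) →
      S *ᵥ u = lmax • u) := by
  classical
  have hdotpos : ∀ v : Fin p → ℝ, v ≠ 0 → 0 < v ⬝ᵥ v := by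
    intro v hv
    have h0 : 0 ≤ v ⬝ᵥ v := by simpa using dotProduct_star_self_nonneg v
    rcases h0.lt_or_eq with h' | h'
    · exact h'
    · exact absurd (dotProduct_self_eq_zero.mp h'.symm) hv
  obtain ⟨v0, hv0, hv0ev⟩ := hlmax_ev
  have hlpos : 0 < lmax := by
    have h1 : 0 < v0 ⬝ᵥ (S *ᵥ v0) := by simpa using hS.dotProduct_mulVec_pos hv0
    rw [hv0ev] at h1
    have h1' : 0 < lmax * (v0 ⬝ᵥ v0) := by simpa [dotProduct_smul] using h1
    have h2 := hdotpos v0 hv0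
    nlinarith
  have hSdet : IsUnit S.det := isUnit_iff_ne_zero.mpr hS.det_pos.ne'
  have hSSinv : ∀ v : Fin p → ℝ, S *ᵥ (S⁻¹ *ᵥ v) = v := by
    intro v
    rw [mulVec_mulVec, mul_nonsing_inv S hSdet, one_mulVec]
  have hSinvS : ∀ v : Fin p → ℝ, S⁻¹ *ᵥ (S *ᵥ v) = v := by
    intro v
    rw [mulVec_mulVec, nonsing_inv_mul S hSdet, one_mulVec]
  have hSinv : (S⁻¹).PosDef := hS.inv
  -- the auxiliary matrix M = lmax • S⁻¹ - 1
  set M : Matrix (Fin p) (Fin p) ℝ := lmax • S⁻¹ - 1 with hMdef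
  have hMherm : M.IsHermitian := by
    have h1 : (S⁻¹).IsHermitian := hSinv.isHermitian
    unfold Matrix.IsHermitian
    rw [hMdef, conjTranspose_sub, conjTranspose_smul, h1.eq]
    simp
  have hMmul : ∀ v : Fin p → ℝ, M *ᵥ v = lmax • (S⁻¹ *ᵥ v) - v := by
    intro v
    rw [hMdef, sub_mulVec, smul_mulVec, one_mulVec]
  have hMdot : ∀ v : Fin p → ℝ, v ⬝ᵥ (M *ᵥ v) = lmax * (v ⬝ᵥ (S⁻¹ *ᵥ v)) - v ⬝ᵥ v := by
    intro v
    rw [hMmul, dotProduct_sub, dotProduct_smul]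
    simp
  -- M is positive semidefinite
  have hMpsd : M.PosSemidef := by
    refine hMherm.posSemidef_iff_eigenvalues_nonneg.mpr (Pi.le_def.mpr ?_)
    intro i; rw [Pi.zero_apply]
    set α := hMherm.eigenvalues i with hα
    set w : Fin p → ℝ := ⇑(hMherm.eigenvectorBasis i) with hw
    have hwev : M *ᵥ w = α • w := hMherm.mulVec_eigenvectorBasis i
    have hwne : w ≠ 0 := by
      intro h
      exact hMherm.eigenvectorBasis.orthonormal.ne_zero i (by ext j; exact congrFun h j)
    have hwdot : 0 < w ⬝ᵥ w := hdotpos w hwne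
    -- S⁻¹ *ᵥ w = ((α+1)/lmax) • w
    have h1 : lmax • (S⁻¹ *ᵥ w) = (α + 1) • w := by
      have := hMmul w
      rw [hwev] at this
      have : lmax • (S⁻¹ *ᵥ w) - w = α • w := this.symm
      have := sub_eq_iff_eq_add.mp this
      rw [this]; module
    have hquadpos : 0 < w ⬝ᵥ (S⁻¹ *ᵥ w) := by simpa using hSinv.dotProduct_mulVec_pos hwne
    have ha1pos : 0 < α + 1 := by
      have h2 : w ⬝ᵥ (lmax • (S⁻¹ *ᵥ w)) = w ⬝ᵥ ((α + 1) • w) := by rw [h1]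
      rw [dotProduct_smul, dotProduct_smul] at h2
      have h3 : lmax * (w ⬝ᵥ (S⁻¹ *ᵥ w)) = (α + 1) * (w ⬝ᵥ w) := by simpa using h2
      nlinarith
    -- S *ᵥ w = (lmax/(α+1)) • w
    have h4 : S *ᵥ w = (lmax / (α + 1)) • w := by
      have h5 : S *ᵥ (lmax • (S⁻¹ *ᵥ w)) = S *ᵥ ((α + 1) • w) := by rw [h1]
      rw [mulVec_smul, mulVec_smul, hSSinv] at h5
      have h6 : (α + 1)⁻¹ • (lmax • w) = (α + 1)⁻¹ • ((α + 1) • S *ᵥ w) := by rw [h5]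
      rw [smul_smul, smul_smul, inv_mul_cancel₀ ha1pos.ne', one_smul] at h6
      rw [← h6]
      congr 1
      exact (div_eq_inv_mul lmax (α + 1)).symm
    have h7 := hlmax_top _ w hwne h4
    -- lmax/(α+1) ≤ lmax, lmax > 0, α+1 > 0 ⟹ α ≥ 0
    rw [div_le_iff₀ ha1pos] at h7
    nlinarith
  -- quadratic bound
  have hquad : ∀ v : Fin p → ℝ, v ⬝ᵥ v ≤ lmax * (v ⬝ᵥ (S⁻¹ *ᵥ v)) := by
    intro v
    have := hMpsd.dotProduct_mulVec_nonneg v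
    have h : (0:ℝ) ≤ v ⬝ᵥ (M *ᵥ v) := by simpa using this
    rw [hMdot] at h
    linarith
  -- equality case
  have heq : ∀ v : Fin p → ℝ, v ⬝ᵥ v = lmax * (v ⬝ᵥ (S⁻¹ *ᵥ v)) → S *ᵥ v = lmax • v := by
    intro v hv
    have h0 : v ⬝ᵥ (M *ᵥ v) = 0 := by rw [hMdot]; linarith
    have h1 : M *ᵥ v = 0 := by
      have := (hMpsd.dotProduct_mulVec_zero_iff v).mp (by simpa using h0)
      exact this
    rw [hMmul] at h1
    have h2 : lmax • (S⁻¹ *ᵥ v) = v := by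
      have := sub_eq_zero.mp h1; exact this
    have h3 : S *ᵥ (lmax • (S⁻¹ *ᵥ v)) = S *ᵥ v := by rw [h2]
    rw [mulVec_smul, hSSinv] at h3
    rw [← h3]
  -- S⁻¹ e = lmax⁻¹ e
  have he_inv : S⁻¹ *ᵥ e = lmax⁻¹ • e := by
    have h1 : S⁻¹ *ᵥ (S *ᵥ e) = S⁻¹ *ᵥ (lmax • e) := by rw [he_ev]
    rw [hSinvS, mulVec_smul] at h1
    have h2 : lmax⁻¹ • e = S⁻¹ *ᵥ e := by
      conv_lhs => rw [h1]
      rw [smul_smul, inv_mul_cancel₀ hlpos.ne', one_smul]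
    exact h2.symm
  have hppos : (0:ℝ) < p := by exact_mod_cast hp
  -- φ on multiples of e
  have hφe : ∀ c : ℝ, φ (c • e) =
      -(1/2 : ℝ) * (c^2 * lmax⁻¹) + ((p : ℝ)/2) * Real.log (4 * c^2) := by
    intro c
    rw [hφ]
    have h1 : (c • e) ⬝ᵥ (c • e) = c^2 := by
      rw [smul_dotProduct, dotProduct_smul, he_unit]; ring_nf
    have h2 : (c • e) ⬝ᵥ (S⁻¹ *ᵥ (c • e)) = c^2 * lmax⁻¹ := by
      rw [mulVec_smul, he_inv, smul_dotProduct, dotProduct_smul, dotProduct_smul, he_unit]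
      ring_nf
    rw [h1, h2]
  set t : ℝ := Real.sqrt ((p : ℝ) * lmax) with ht
  have ht2 : t^2 = (p : ℝ) * lmax := Real.sq_sqrt (by positivity)
  have htpos : 0 < t := Real.sqrt_pos.mpr (by positivity)
  have hφt : φ (t • e) = -(1/2 : ℝ) * (p : ℝ) + ((p : ℝ)/2) * Real.log (4 * ((p : ℝ) * lmax)) := by
    rw [hφe, ht2]
    field_simp
  have hφnt : φ ((-t) • e) = φ (t • e) := by
    rw [hφe, hφe, neg_sq]
  -- the scalar bound : for r > 0,  -(1/2)*(r/lmax) + (p/2) log (4r) ≤ φ(t•e)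
  have hscalar : ∀ r : ℝ, 0 < r →
      -(1/2 : ℝ) * (r / lmax) + ((p : ℝ)/2) * Real.log (4 * r) ≤ φ (t • e) := by
    intro r hr
    rw [hφt]
    have hlog : Real.log (4 * r) - Real.log (4 * ((p : ℝ) * lmax)) ≤ r / ((p : ℝ) * lmax) - 1 := by
      have h1 : Real.log (4 * r) - Real.log (4 * ((p : ℝ) * lmax)) =
          Real.log ((4 * r) / (4 * ((p : ℝ) * lmax))) := by
        rw [Real.log_div (by positivity) (by positivity)]
      rw [h1]
      have h2 : (4 * r) / (4 * ((p : ℝ) * lmax)) = r / ((p : ℝ) * lmax) := by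
        field_simp
      rw [h2]
      exact Real.log_le_sub_one_of_pos (by positivity)
    have hpl : 0 < (p : ℝ) * lmax := by positivity
    have key : ((p : ℝ)/2) * (Real.log (4 * r) - Real.log (4 * ((p : ℝ) * lmax))) ≤
        ((p : ℝ)/2) * (r / ((p : ℝ) * lmax) - 1) := by
      apply mul_le_mul_of_nonneg_left hlog (by positivity)
    have hdiv : ((p : ℝ)/2) * (r / ((p : ℝ) * lmax) - 1) = r / (2 * lmax) - (p : ℝ)/2 := by
      field_simp
    rw [hdiv] at key
    have : r / (2 * lmax) = (1/2) * (r / lmax) := by ring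
    nlinarith
  -- main upper bound
  have hmain : ∀ v : Fin p → ℝ, v ≠ 0 → φ v ≤ φ (t • e) := by
    intro v hv
    have hr := hdotpos v hv
    have hq := hquad v
    rw [hφ]
    have h1 : -(1/2 : ℝ) * (v ⬝ᵥ (S⁻¹ *ᵥ v)) ≤ -(1/2 : ℝ) * ((v ⬝ᵥ v) / lmax) := by
      have : (v ⬝ᵥ v) / lmax ≤ v ⬝ᵥ (S⁻¹ *ᵥ v) := by
        rw [div_le_iff₀ hlpos]; linarith [hq, mul_comm lmax (v ⬝ᵥ (S⁻¹ *ᵥ v))]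
      linarith
    calc -(1/2 : ℝ) * (v ⬝ᵥ (S⁻¹ *ᵥ v)) + ((p : ℝ)/2) * Real.log (4 * (v ⬝ᵥ v))
        ≤ -(1/2 : ℝ) * ((v ⬝ᵥ v) / lmax) + ((p : ℝ)/2) * Real.log (4 * (v ⬝ᵥ v)) := by linarith
      _ ≤ φ (t • e) := hscalar _ hr
  refine ⟨hmain, ?_, ?_⟩
  · intro v hv
    have : φ (-(t) • e) = φ (t • e) := by
      rw [show -(t) • e = (-t) • e from rfl, hφnt]
    rw [this]
    exact hmain v hv
  · intro u hu hmaxu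
    by_contra hne
    -- strict inequality in the quadratic bound
    have hr := hdotpos u hu
    have hq := hquad u
    have hstrict : u ⬝ᵥ u < lmax * (u ⬝ᵥ (S⁻¹ *ᵥ u)) := by
      rcases hq.lt_or_eq with h | h
      · exact h
      · exact absurd (heq u h) hne
    have hene : e ≠ 0 := by
      intro h; rw [h] at he_unit; simp at he_unit
    have hte : t • e ≠ 0 := smul_ne_zero htpos.ne' hene
    have h1 : φ (t • e) ≤ φ u := hmaxu _ hte
    have h2 : φ u < φ (t • e) := by
      rw [hφ]
      have h3 : -(1/2 : ℝ) * (u ⬝ᵥ (S⁻¹ *ᵥ u)) < -(1/2 : ℝ) * ((u ⬝ᵥ u) / lmax) := by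
        have : (u ⬝ᵥ u) / lmax < u ⬝ᵥ (S⁻¹ *ᵥ u) := by
          rw [div_lt_iff₀ hlpos]
          nlinarith
        linarith
      calc -(1/2 : ℝ) * (u ⬝ᵥ (S⁻¹ *ᵥ u)) + ((p : ℝ)/2) * Real.log (4 * (u ⬝ᵥ u))
          < -(1/2 : ℝ) * ((u ⬝ᵥ u) / lmax) + ((p : ℝ)/2) * Real.log (4 * (u ⬝ᵥ u)) := by linarith
        _ ≤ φ (t • e) := hscalar _ hr
    linarith
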